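/- Let p > 0 and let (β_t) and (σ_t) be sequences of nonnegative reals such that β_{t+1} ≤ (1 - σ_t β_t^p) β_t for all t ∈ ℕ. Then for all t ∈ ℕ, β_t ≤ (β_0^{-p} + p ∑_{i=0}^{t-1} σ_i)^{-1/p}. -/

import Mathlib

open Real

lemma bern_aux (p u : ℝ) (hp : 0 < p) (hu0 : 0 ≤ u) (hu1 : u < 1) :
    1 + p * u ≤ (1 - u) ^ (-p) := by
  have h1u : (0:ℝ) < 1 - u := by linarith
  rcases le_or_gt 1 p with hp1 | hp1
  · -- p ≥ 1 : Bernoulli with s = u/(1-u)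
    set s := u / (1 - u) with hs
    have hs0 : 0 ≤ s := div_nonneg hu0 h1u.le
    have h := one_add_mul_self_le_rpow_one_add (by linarith : (-1:ℝ) ≤ s) hp1
    have h1s : 1 + s = (1 - u)⁻¹ := by rw [hs]; field_simp; ring
    have hus : u ≤ s := by
      rw [hs, le_div_iff₀ h1u]; nlinarith
    have : (1 + s) ^ p = (1 - u) ^ (-p) := by
      rw [h1s, Real.inv_rpow h1u.le, ← Real.rpow_neg h1u.le]
    calc 1 + p * u ≤ 1 + p * s := by nlinarith
      _ ≤ (1 + s) ^ p := h
      _ = (1 - u) ^ (-p) := this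
  · -- p < 1
    have h := rpow_one_add_le_one_add_mul_self (by linarith : (-1:ℝ) ≤ -u) hp.le hp1.le
    have h' : (1 - u) ^ p ≤ 1 - p * u := by
      have heq : 1 + -u = 1 - u := by ring
      rw [heq] at h; linarith
    have hpu : p * u < 1 := by nlinarith
    have hpow : (0:ℝ) < (1 - u) ^ p := Real.rpow_pos_of_pos h1u p
    have hneg : (1 - u) ^ (-p) = ((1 - u) ^ p)⁻¹ := Real.rpow_neg h1u.le p
    rw [hneg, ← one_div, le_div_iff₀ hpow]
    nlinarith [mul_le_mul_of_nonneg_left h' (by nlinarith : (0:ℝ) ≤ 1 + p * u), sq_nonneg (p * u)]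

/-- Lemma (Polyak / Borwein): if `p > 0`, `β, σ` are nonnegative sequences with
`β (t+1) ≤ (1 - σ t * (β t)^p) * β t`, and `β 0 > 0`, then
`β t ≤ (β 0 ^ (-p) + p * ∑_{i<t} σ i) ^ (-1/p)`. -/
theorem stmt0 (p : ℝ) (hp : 0 < p) (β σ : ℕ → ℝ)
    (hβ : ∀ t, 0 ≤ β t) (hσ : ∀ t, 0 ≤ σ t) (hβ0 : 0 < β 0)
    (hrec : ∀ t, β (t + 1) ≤ (1 - σ t * β t ^ p) * β t) :
    ∀ t, β t ≤ (β 0 ^ (-p) + p * ∑ i ∈ Finset.range t, σ i) ^ (-1 / p) := by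
  set A : ℕ → ℝ := fun t => β 0 ^ (-p) + p * ∑ i ∈ Finset.range t, σ i with hA
  have hApos : ∀ t, 0 < A t := by
    intro t
    have : (0:ℝ) < β 0 ^ (-p) := Real.rpow_pos_of_pos hβ0 _
    have hsum : 0 ≤ ∑ i ∈ Finset.range t, σ i := Finset.sum_nonneg fun i _ => hσ i
    have := mul_nonneg hp.le hsum
    simp only [hA]; linarith
  have key : ∀ t, β t = 0 ∨ (0 < β t ∧ A t ≤ β t ^ (-p)) := by
    intro t
    induction t with
    | zero =>
      right
      refine ⟨hβ0, ?_⟩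
      simp [hA]
    | succ t ih =>
      rcases ih with h0 | ⟨hpos, hle⟩
      · left
        have := hrec t
        rw [h0] at this
        simp at this
        exact le_antisymm this (hβ (t+1))
      · rcases eq_or_lt_of_le (hβ (t+1)) with h0 | hpos'
        · left; exact h0.symm
        · right
          refine ⟨hpos', ?_⟩
          set u := σ t * β t ^ p with hu
          have hu0 : 0 ≤ u := mul_nonneg (hσ t) (Real.rpow_nonneg (hβ t) p)
          have hu1 : u < 1 := by
            by_contra h
            push_neg at h
            have := hrec t
            nlinarith [hβ t, hβ (t+1), mul_nonpos_of_nonpos_of_nonneg (by linarith : 1 - u ≤ 0) (hβ t)]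
          -- β(t+1) ≤ (1-u) β t, both positive
          have hstep : β (t+1) ≤ (1 - u) * β t := hrec t
          have h1u : (0:ℝ) < 1 - u := by linarith
          have hmono : ((1 - u) * β t) ^ (-p) ≤ β (t+1) ^ (-p) :=
            Real.rpow_le_rpow_of_nonpos hpos' hstep (by linarith)
          have hsplit : ((1 - u) * β t) ^ (-p) = (1 - u) ^ (-p) * β t ^ (-p) :=
            Real.mul_rpow h1u.le hpos.le
          have hbern : 1 + p * u ≤ (1 - u) ^ (-p) := bern_aux p u hp hu0 hu1
          have hcancel : β t ^ p * β t ^ (-p) = 1 := by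
            rw [← Real.rpow_add hpos]; simp
          have hβtp : 0 < β t ^ (-p) := Real.rpow_pos_of_pos hpos _
          have h2 : β t ^ (-p) + p * σ t ≤ ((1 - u) * β t) ^ (-p) := by
            rw [hsplit]
            have hmul := mul_le_mul_of_nonneg_right hbern hβtp.le
            have heq : (1 + p * u) * β t ^ (-p) = β t ^ (-p) + p * σ t := by
              rw [hu]; linear_combination (p * σ t) * hcancel
            linarith
          have hAsucc : A (t+1) = A t + p * σ t := by
            simp [hA, Finset.sum_range_succ]; ring
          rw [hAsucc]
          calc A t + p * σ t ≤ β t ^ (-p) + p * σ t := by linarith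
            _ ≤ ((1 - u) * β t) ^ (-p) := h2
            _ ≤ β (t+1) ^ (-p) := hmono
  intro t
  rcases key t with h0 | ⟨hpos, hle⟩
  · rw [h0]
    exact (Real.rpow_pos_of_pos (hApos t) _).le
  · have hz : -1 / p ≤ 0 := by
      rw [neg_div]
      exact neg_nonpos.mpr (by positivity)
    have h1 : (β t ^ (-p)) ^ (-1/p) ≤ A t ^ (-1/p) :=
      Real.rpow_le_rpow_of_nonpos (hApos t) hle hz
    have hp0 : p ≠ 0 := hp.ne'
    have h2 : (β t ^ (-p)) ^ (-1/p) = β t := by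
      rw [← Real.rpow_mul hpos.le, show (-p) * (-1/p) = 1 by field_simp, Real.rpow_one]
    calc β t = (β t ^ (-p)) ^ (-1/p) := h2.symm
      _ ≤ A t ^ (-1/p) := h1
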